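/- arXiv:2003.06267 — 5 statements merged into one kernel-verified Lean document; each statement's English description precedes it below -/
import Mathlib

section
/- Let (A, ≤_A, Con_A) be a prime event structure with family of configurations C(A). For an extremal realisation (R,≤_R),ρ of C(A), the function ρ : R → ρR is an order isomorphism between (R,≤_R) and the configuration ρR ∈ C(A) ordered by the restriction of ≤_A. Moreover the function sending an extremal realisation (R,≤_R),ρ to the configuration ρR is an order isomorphism from the order of extremal realisations of C(A) to the configurations of A ordered by inclusion, under which prime extremal realisations correspond exactly to the complete primes of C(A), i.e. the configurations of the form [e] for an event e. -/
universe u v w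

/-- The image of a set under a partial function. -/
def pimage {α : Type u} {β : Type v} (f : α → Option β) (x : Set α) : Set β :=
  {b | ∃ a ∈ x, f a = some b}

/-- A family of configurations over the set of events `A`:
a non-empty family of subsets, whose underlying set is all of `A`,
closed under unions of finitely compatible subfamilies,
and satisfying the securing-chain condition. -/
structure ConfigFamily (A : Type u) where
  F : Set (Set A)
  nonempty : F.Nonempty
  covers : ∀ a : A, ∃ x ∈ F, a ∈ x
  unionClosed : ∀ X ⊆ F, (∀ Y ⊆ X, Y.Finite → ∃ z ∈ F, ∀ y ∈ Y, y ⊆ z) → ⋃₀ X ∈ F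
  secured : ∀ x ∈ F, ∀ e ∈ x, ∃ l : List A, l ≠ [] ∧ l.getLast? = some e ∧
    (∀ a ∈ l, a ∈ x) ∧ ∀ i, 0 < i → i ≤ l.length → {a | a ∈ l.take i} ∈ F

/-- A causal realisation of the family `C`: a partial order whose
principal lower sets are finite, together with a function to events
sending every down-closed subset to a configuration of the family. -/
structure Realisation {A : Type u} (C : ConfigFamily A) where
  carrier : Type u
  le : carrier → carrier → Prop
  le_refl : ∀ a, le a a
  le_trans : ∀ a b c, le a b → le b c → le a c
  le_antisymm : ∀ a b, le a b → le b a → a = b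
  finPast : ∀ e, {e' | le e' e}.Finite
  ρ : carrier → A
  real : ∀ x : Set carrier, (∀ a ∈ x, ∀ b, le b a → b ∈ x) → ρ '' x ∈ C.F

namespace Realisation

variable {A : Type u} {C : ConfigFamily A}

/-- Down-closed subsets of the carrier of a realisation. -/
def IsDown (r : Realisation C) (x : Set r.carrier) : Prop :=
  ∀ a ∈ x, ∀ b, r.le b a → b ∈ x

/-- The set `[a) = [a] \ {a}` of strict predecessors. -/
def spred (r : Realisation C) (a : r.carrier) : Set r.carrier :=
  {b | r.le b a ∧ b ≠ a}

/-- The carrier has a top element. -/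
def HasTop (r : Realisation C) : Prop := ∃ t, ∀ a, r.le a t

end Realisation

/-- A map of realisations: a partial surjective function between the carriers,
preserving down-closed subsets and commuting with the functions to events. -/
structure RealMap {A : Type u} {C : ConfigFamily A} (r r' : Realisation C) where
  f : r.carrier → Option r'.carrier
  surj : ∀ b, ∃ a, f a = some b
  presDown : ∀ x, r.IsDown x → r'.IsDown (pimage f x)
  commutes : ∀ a b, f a = some b → r.ρ a = r'.ρ b

namespace RealMap

variable {A : Type u} {C : ConfigFamily A} {r r' r₀ : Realisation C}

/-- The map is total. -/
def IsTotal (m : RealMap r r') : Prop := ∀ a, ∃ b, m.f a = some b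

/-- The map is an isomorphism of realisations: it has an inverse map of
realisations, given by the inverse relation. -/
def IsIso (m : RealMap r r') : Prop :=
  ∃ m' : RealMap r' r, ∀ a b, m.f a = some b ↔ m'.f b = some a

/-- `m : r → r₀` is a projection witnessed by `g`: `g` realises the carrier of
`r₀` as a subset of the carrier of `r` with the restricted order and restricted
function to events, and `m` is the inverse relation of this inclusion. -/
def IsProjectionVia (m : RealMap r r₀) (g : r₀.carrier → r.carrier) : Prop :=
  Function.Injective g ∧ (∀ a b, r₀.le a b ↔ r.le (g a) (g b)) ∧
    (∀ a, r₀.ρ a = r.ρ (g a)) ∧ (∀ a b, m.f a = some b ↔ g b = a)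

/-- `m` is a projection. -/
def IsProjection (m : RealMap r r₀) : Prop := ∃ g, m.IsProjectionVia g

end RealMap

/-- A realisation is extremal when every total map of realisations from it
is an isomorphism. -/
def Realisation.Extremal {A : Type u} {C : ConfigFamily A} (r : Realisation C) : Prop :=
  ∀ (r' : Realisation C) (m : RealMap r r'), m.IsTotal → m.IsIso

/-- A prime extremal realisation: extremal with a top element. -/
def Realisation.PrimeExtremal {A : Type u} {C : ConfigFamily A} (r : Realisation C) : Prop :=
  r.Extremal ∧ r.HasTop

/-- Isomorphism of realisations. -/
def RealIso {A : Type u} {C : ConfigFamily A} (r r' : Realisation C) : Prop :=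
  ∃ m : RealMap r r', m.IsIso

/-- `m` is the composite of `m₁` followed by `m₂` (as partial functions). -/
def CompEq {A : Type u} {C : ConfigFamily A} {r r' r'' : Realisation C}
    (m₁ : RealMap r r') (m₂ : RealMap r' r'') (m : RealMap r r'') : Prop :=
  ∀ a c, m.f a = some c ↔ ∃ b, m₁.f a = some b ∧ m₂.f b = some c

/-- Down-closed subsets w.r.t. a causal dependency relation. -/
def DnClosed {P : Type u} (le : P → P → Prop) (x : Set P) : Prop :=
  ∀ a ∈ x, ∀ b, le b a → b ∈ x

/-- Configurations of a (prime) event structure: down-closed subsets all of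
whose finite subsets are consistent. -/
def IsCfg {P : Type u} (le : P → P → Prop) (Con : Set (Set P)) (x : Set P) : Prop :=
  DnClosed le x ∧ ∀ X ⊆ x, X.Finite → X ∈ Con

/-- The set `[p) = [p] \ {p}` of strict causal predecessors. -/
def strictPred {P : Type u} (le : P → P → Prop) (p : P) : Set P :=
  {p' | le p' p ∧ p' ≠ p}

/-- The data of a prime event structure. -/
structure PESData (E : Type u) where
  le : E → E → Prop
  Con : Set (Set E)

/-- The axioms of a prime event structure. -/
structure IsPES {E : Type u} (D : PESData E) : Prop where
  le_refl : ∀ a, D.le a a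
  le_trans : ∀ a b c, D.le a b → D.le b c → D.le a c
  le_antisymm : ∀ a b, D.le a b → D.le b a → a = b
  finCause : ∀ e, {e' | D.le e' e}.Finite
  con_fin : ∀ X ∈ D.Con, X.Finite
  con_single : ∀ e, ({e} : Set E) ∈ D.Con
  con_mono : ∀ X Y, X ⊆ Y → Y ∈ D.Con → X ∈ D.Con
  con_le : ∀ X ∈ D.Con, ∀ e e', D.le e e' → e' ∈ X → X ∪ {e} ∈ D.Con

section Aux

variable {E : Type u} {D : PESData E} {C : ConfigFamily E}

private lemma memF (hC : C.F = {x | IsCfg D.le D.Con x}) {x : Set E} (hx : x ∈ C.F) :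
    DnClosed D.le x ∧ ∀ X ⊆ x, X.Finite → X ∈ D.Con := by
  rw [hC] at hx; exact hx

private lemma memF' (hC : C.F = {x | IsCfg D.le D.Con x}) {x : Set E}
    (h1 : DnClosed D.le x) (h2 : ∀ X ⊆ x, X.Finite → X ∈ D.Con) : x ∈ C.F := by
  rw [hC]; exact ⟨h1, h2⟩

/-- The realisation given by a configuration with the restricted order. -/
private def subReal (hD : IsPES D) (hC : C.F = {x | IsCfg D.le D.Con x})
    (x : Set E) (hx : x ∈ C.F) : Realisation C where
  carrier := {a // a ∈ x}
  le a b := D.le a.1 b.1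
  le_refl a := hD.le_refl _
  le_trans a b c := hD.le_trans _ _ _
  le_antisymm a b h1 h2 := Subtype.ext (hD.le_antisymm _ _ h1 h2)
  finPast e := by
    have h1 : Set.InjOn (Subtype.val : {a // a ∈ x} → E)
        (Subtype.val ⁻¹' {e' | D.le e' e.1}) := Subtype.val_injective.injOn
    have h2 : (Subtype.val ⁻¹' {e' | D.le e' e.1} : Set {a // a ∈ x}).Finite :=
      Set.Finite.preimage h1 (hD.finCause e.1)
    exact h2.subset (fun a ha => ha)
  ρ := Subtype.val
  real u hu := by
    apply memF' hC
    · rintro a ⟨c, hc, rfl⟩ b hb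
      have hbx : b ∈ x := (memF hC hx).1 _ c.2 _ hb
      exact ⟨⟨b, hbx⟩, hu c hc ⟨b, hbx⟩ hb, rfl⟩
    · intro X hX hXf
      refine (memF hC hx).2 X (fun a ha => ?_) hXf
      obtain ⟨c, _, rfl⟩ := hX ha; exact c.2

private lemma subReal_le (hD : IsPES D) (hC : C.F = {x | IsCfg D.le D.Con x})
    (x : Set E) (hx : x ∈ C.F) (a b : (subReal hD hC x hx).carrier) :
    (subReal hD hC x hx).le a b ↔ D.le a.1 b.1 := Iff.rfl

/-- Configurations with the restricted order are extremal realisations. -/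
private lemma subReal_extremal (hD : IsPES D) (hC : C.F = {x | IsCfg D.le D.Con x})
    (x : Set E) (hx : x ∈ C.F) : (subReal hD hC x hx).Extremal := by
  intro r' m hm
  -- extract the total function g
  choose g hg using hm
  have hρg : ∀ a, r'.ρ (g a) = a.1 := fun a => (m.commutes a (g a) (hg a)).symm
  have hginj : Function.Injective g := by
    intro a a' h
    apply Subtype.ext
    rw [← hρg a, ← hρg a', h]
  have hgsurj : Function.Surjective g := by
    intro b
    obtain ⟨a, ha⟩ := m.surj b
    exact ⟨a, by rw [hg a] at ha; exact Option.some.inj ha⟩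
  have hρ'inj : Function.Injective r'.ρ := by
    intro b b' h
    obtain ⟨a, rfl⟩ := hgsurj b
    obtain ⟨a', rfl⟩ := hgsurj b'
    rw [hρg, hρg] at h
    exact congrArg g (Subtype.ext h)
  -- the inverse bijection
  have hbij : Function.Bijective g := ⟨hginj, hgsurj⟩
  let e := Equiv.ofBijective g hbij
  have hge : ∀ b a, e.symm b = a ↔ g a = b := by
    intro b a
    constructor
    · rintro rfl; exact e.apply_symm_apply b
    · rintro rfl; exact e.symm_apply_apply a
  refine ⟨⟨fun b => some (e.symm b), fun a => ⟨g a, by rw [Option.some_inj, hge]⟩,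
      ?_, ?_⟩, ?_⟩
  · -- presDown for the inverse map
    intro y hy
    rintro a ⟨b, hb, hab⟩ a' ha'
    rw [Option.some_inj, hge] at hab
    have hcfg := memF hC (r'.real y hy)
    have h1 : r'.ρ b ∈ r'.ρ '' y := ⟨b, hb, rfl⟩
    have h2 : r'.ρ (g a') ∈ r'.ρ '' y := by
      apply hcfg.1 _ h1
      rw [hρg, ← hab, hρg]
      exact ha'
    obtain ⟨c, hc, hceq⟩ := h2
    have : c = g a' := hρ'inj hceq
    exact ⟨g a', this ▸ hc, by rw [Option.some_inj, hge]⟩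
  · -- commutes for the inverse map
    intro b a hab
    rw [Option.some_inj, hge] at hab
    rw [← hab, hρg]
    rfl
  · -- inverse relation
    intro a b
    rw [hg a, Option.some_inj, Option.some_inj, hge]

/-- An extremal realisation is an order-iso onto its image configuration. -/
private lemma extremal_iso (hD : IsPES D) (hC : C.F = {x | IsCfg D.le D.Con x})
    (r : Realisation C) (hr : r.Extremal) :
    Function.Injective r.ρ ∧ (∀ a b, r.le a b ↔ D.le (r.ρ a) (r.ρ b)) ∧
      Set.range r.ρ ∈ C.F := by
  have hx : Set.range r.ρ ∈ C.F := by
    have := r.real Set.univ (fun a _ b _ => Set.mem_univ b)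
    rwa [Set.image_univ] at this
  set r' := subReal hD hC (Set.range r.ρ) hx with hr'
  -- the evident total map r → r'
  have hmem : ∀ a, r.ρ a ∈ Set.range r.ρ := fun a => Set.mem_range_self a
  have hpd : ∀ u, r.IsDown u →
      r'.IsDown (pimage (fun a => some (⟨r.ρ a, hmem a⟩ : r'.carrier)) u) := by
    intro u hu
    rintro b ⟨a, ha, hab⟩ c hcb
    have hab := Option.some.inj hab
    have hcfg := memF hC (r.real u hu)
    have h1 : b.1 ∈ r.ρ '' u := by rw [← hab]; exact ⟨a, ha, rfl⟩
    have h2 : c.1 ∈ r.ρ '' u := hcfg.1 _ h1 _ hcb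
    obtain ⟨a', ha', haeq⟩ := h2
    exact ⟨a', ha', Option.some_inj.mpr (Subtype.ext haeq)⟩
  let m : RealMap r r' :=
    ⟨fun a => some (⟨r.ρ a, hmem a⟩ : r'.carrier),
     fun b => by
       obtain ⟨a, ha⟩ := b.2
       exact ⟨a, Option.some_inj.mpr (Subtype.ext ha)⟩,
     hpd,
     fun a b hab => by have hab := Option.some.inj hab; rw [← hab]; rfl⟩
  obtain ⟨m', hmm'⟩ := hr r' m (fun a => ⟨_, rfl⟩)
  have hmf : ∀ a b, m.f a = some b ↔ b.1 = r.ρ a := by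
    intro a b
    show some (⟨r.ρ a, hmem a⟩ : r'.carrier) = some b ↔ _
    refine Option.some_inj.trans ?_
    exact ⟨fun h => by rw [← h], fun h => Subtype.ext h.symm⟩
  have hinj : Function.Injective r.ρ := by
    intro a a' h
    have h1 : m.f a = some ⟨r.ρ a, hmem a⟩ := rfl
    have h2 : m.f a' = some ⟨r.ρ a, hmem a⟩ := (hmf _ _).2 h
    replace h1 := (hmm' _ _).1 h1; replace h2 := (hmm' _ _).1 h2
    have h2 := h1.symm.trans h2
    exact Option.some.inj h2
  refine ⟨hinj, fun a b => ⟨?_, ?_⟩, hx⟩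
  · -- forward: r.le a b → D.le (ρ a) (ρ b), via m'
    intro hab
    have hy : r'.IsDown {c : r'.carrier | D.le c.1 (r.ρ b)} := by
      intro c hc c' hc'
      exact hD.le_trans _ _ _ hc' hc
    have hdown := m'.presDown _ hy
    have hbmem : b ∈ pimage m'.f {c : r'.carrier | D.le c.1 (r.ρ b)} := by
      refine ⟨⟨r.ρ b, hmem b⟩, hD.le_refl _, ?_⟩
      exact (hmm' _ _).1 rfl
    have hamem := hdown b hbmem a hab
    obtain ⟨c, hc, hca⟩ := hamem
    have hca := (hmf _ _).1 ((hmm' _ _).2 hca)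
    rw [← hca]
    exact hc
  · -- backward: D.le (ρ a) (ρ b) → r.le a b, via m
    intro hab
    have hu : r.IsDown {c | r.le c b} := fun c hc c' hc' => r.le_trans _ _ _ hc' hc
    have hdown := m.presDown _ hu
    have hbmem : (⟨r.ρ b, hmem b⟩ : r'.carrier) ∈ pimage m.f {c | r.le c b} :=
      ⟨b, r.le_refl b, rfl⟩
    have hamem := hdown _ hbmem ⟨r.ρ a, hmem a⟩ hab
    obtain ⟨c, hc, hca⟩ := hamem
    have hca := (hmf _ _).1 hca
    have : c = a := hinj hca.symm
    rwa [← this]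

end Aux

/-- For a prime event structure, extremal realisations of its family of
configurations are order-isomorphic (via `ρ`) to their image configurations,
the map `r ↦ ρR` is an order isomorphism from the order of extremal
realisations to the configurations ordered by inclusion, and prime extremal
realisations correspond exactly to the complete primes `[e]`. -/
theorem stmt11 {E : Type u} (D : PESData E) (hD : IsPES D) (C : ConfigFamily E)
    (hC : C.F = {x | IsCfg D.le D.Con x}) :
    (∀ r : Realisation C, r.Extremal →
        Function.Injective r.ρ ∧ (∀ a b, r.le a b ↔ D.le (r.ρ a) (r.ρ b)) ∧
        Set.range r.ρ ∈ C.F) ∧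
    (∀ x ∈ C.F, ∃ r : Realisation C, r.Extremal ∧ Set.range r.ρ = x) ∧
    (∀ r r' : Realisation C, r.Extremal → r'.Extremal →
        (Nonempty (RealMap r r') ↔ Set.range r'.ρ ⊆ Set.range r.ρ)) ∧
    (∀ r : Realisation C, r.Extremal →
        (r.HasTop ↔ ∃ e : E, Set.range r.ρ = {e' | D.le e' e})) := by
  have P1 := fun r hr => extremal_iso hD hC r hr
  refine ⟨P1, ?_, ?_, ?_⟩
  · -- part 2: every configuration is the image of an extremal realisation
    intro x hx
    refine ⟨subReal hD hC x hx, subReal_extremal hD hC x hx, ?_⟩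
    ext a
    constructor
    · rintro ⟨b, rfl⟩; exact b.2
    · intro ha; exact ⟨⟨a, ha⟩, rfl⟩
  · -- part 3: maps between extremal realisations ↔ inclusion of images
    intro r r' hr hr'
    obtain ⟨hinj, hord, hxF⟩ := P1 r hr
    obtain ⟨hinj', hord', hxF'⟩ := P1 r' hr'
    constructor
    · rintro ⟨m⟩ e ⟨b, rfl⟩
      obtain ⟨a, ha⟩ := m.surj b
      exact ⟨a, m.commutes a b ha⟩
    · intro hsub
      classical
      let f : r.carrier → Option r'.carrier := fun a =>
        if h : ∃ b, r'.ρ b = r.ρ a then some h.choose else none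
      have hfs : ∀ a b, f a = some b ↔ r'.ρ b = r.ρ a := by
        intro a b
        constructor
        · intro h
          by_cases hh : ∃ b', r'.ρ b' = r.ρ a
          · simp only [f, dif_pos hh, Option.some_inj] at h
            rw [← h]; exact hh.choose_spec
          · rw [show f a = none from dif_neg hh] at h
            exact absurd h.symm (Option.some_ne_none _)
        · intro h
          have hh : ∃ b', r'.ρ b' = r.ρ a := ⟨b, h⟩
          simp only [f, dif_pos hh, Option.some_inj]
          exact hinj' (hh.choose_spec.trans h.symm)
      refine ⟨⟨f, ?_, ?_, fun a b h => ((hfs a b).1 h).symm⟩⟩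
      · intro b
        obtain ⟨a, ha⟩ := hsub ⟨b, rfl⟩
        exact ⟨a, (hfs a b).2 ha.symm⟩
      · intro u hu
        rintro b ⟨a, ha, hab⟩ c hcb
        rw [hfs] at hab
        have hcfg := memF hC (r.real u hu)
        have h1 : r'.ρ b ∈ r.ρ '' u := hab ▸ ⟨a, ha, rfl⟩
        have h2 : r'.ρ c ∈ r.ρ '' u := hcfg.1 _ h1 _ ((hord' c b).1 hcb)
        obtain ⟨a', ha', haeq⟩ := h2
        exact ⟨a', ha', (hfs a' c).2 haeq.symm⟩
  · -- part 4: prime extremal realisations ↔ complete primes [e]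
    intro r hr
    obtain ⟨hinj, hord, hxF⟩ := P1 r hr
    constructor
    · rintro ⟨t, ht⟩
      refine ⟨r.ρ t, ?_⟩
      ext e'
      constructor
      · rintro ⟨a, rfl⟩; exact (hord a t).1 (ht a)
      · intro he'
        exact (memF hC hxF).1 _ ⟨t, rfl⟩ _ he'
    · rintro ⟨e, he⟩
      have hetop : e ∈ Set.range r.ρ := by rw [he]; exact hD.le_refl e
      obtain ⟨t, ht⟩ := hetop
      refine ⟨t, fun a => ?_⟩
      rw [hord, ht]
      have : r.ρ a ∈ Set.range r.ρ := ⟨a, rfl⟩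
      rw [he] at this
      exact this
end

section
/- A map of ese's from P to Q, i.e. a map of equivalence families from (C(P),≡_P) to (C(Q),≡_Q), is exactly a partial function f : P ⇀ Q which preserves ≡ such that: (i) for all X ∈ Con_P, the direct image fX ∈ Con_Q, and for all p₁, p₂ ∈ X, f(p₁) ≡_Q f(p₂) (both defined) implies p₁ ≡_P p₂; and (ii) whenever q ≤_Q f(p) there is p' ≤_P p with f(p') = q. -/
universe u v w

/-- The data of a prime event structure with equivalence (ese). -/
structure ESEData (P : Type u) where
  le : P → P → Prop
  Con : Set (Set P)
  eqv : P → P → Prop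

/-- The axioms of a prime event structure with equivalence. -/
structure IsESE {P : Type u} (D : ESEData P) : Prop where
  le_refl : ∀ a, D.le a a
  le_trans : ∀ a b c, D.le a b → D.le b c → D.le a c
  le_antisymm : ∀ a b, D.le a b → D.le b a → a = b
  finCause : ∀ e, {e' | D.le e' e}.Finite
  con_fin : ∀ X ∈ D.Con, X.Finite
  con_single : ∀ e, ({e} : Set P) ∈ D.Con
  con_mono : ∀ X Y, X ⊆ Y → Y ∈ D.Con → X ∈ D.Con
  con_le : ∀ X ∈ D.Con, ∀ e e', D.le e e' → e' ∈ X → X ∪ {e} ∈ D.Con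
  eqv_equiv : Equivalence D.eqv

/-- The configurations of an ese. -/
def Cfgs {P : Type u} (D : ESEData P) : Set (Set P) := {x | IsCfg D.le D.Con x}

/-- A partial function preserves the equivalences: equivalent elements are
either both sent to nothing, or both to defined, equivalent results. -/
def PreservesEqv {α : Type u} {β : Type v} (eA : α → α → Prop) (eB : β → β → Prop)
    (f : α → Option β) : Prop :=
  ∀ a₁ a₂, eA a₁ a₂ → (f a₁ = none ∧ f a₂ = none) ∨
    ∃ b₁ b₂, f a₁ = some b₁ ∧ f a₂ = some b₂ ∧ eB b₁ b₂

/-- A map of equivalence families (given by their families of configurations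
and equivalences): a partial function which preserves the equivalence, sends
configurations to configurations, and locally reflects the equivalence. -/
def IsEFMap {α : Type u} {β : Type v} (FA : Set (Set α)) (eA : α → α → Prop)
    (FB : Set (Set β)) (eB : β → β → Prop) (f : α → Option β) : Prop :=
  PreservesEqv eA eB f ∧ ∀ x ∈ FA, pimage f x ∈ FB ∧
    ∀ a₁ ∈ x, ∀ a₂ ∈ x, ∀ b₁ b₂, f a₁ = some b₁ → f a₂ = some b₂ → eB b₁ b₂ → eA a₁ a₂

/-- A map of ese's: a map of equivalence families between the families of
configurations with their equivalences. -/
def IsESEMap {P : Type u} {Q : Type v} (DP : ESEData P) (DQ : ESEData Q)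
    (f : P → Option Q) : Prop :=
  IsEFMap (Cfgs DP) DP.eqv (Cfgs DQ) DQ.eqv f

/-- Equivalence of partial maps: equidefined with equivalent results. -/
def MapEqv {α : Type u} {β : Type v} (eB : β → β → Prop) (f g : α → Option β) : Prop :=
  ∀ a, (f a = none ∧ g a = none) ∨ ∃ b₁ b₂, f a = some b₁ ∧ g a = some b₂ ∧ eB b₁ b₂

lemma dnCl_cfg {Pt : Type u} (DP : ESEData Pt) (hP : IsESE DP)
    {X : Set Pt} (hX : X ∈ DP.Con) :
    IsCfg DP.le DP.Con {p | ∃ x ∈ X, DP.le p x} := by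
  constructor
  · rintro a ⟨x, hx, hax⟩ b hba
    exact ⟨x, hx, hP.le_trans _ _ _ hba hax⟩
  · intro Y hY hYfin
    have key : ∀ Z : Set Pt, Z.Finite → Z ⊆ {p | ∃ x ∈ X, DP.le p x} →
        X ∪ Z ∈ DP.Con := by
      intro Z hZfin
      refine Set.Finite.induction_on
        (motive := fun Z _ => Z ⊆ {p | ∃ x ∈ X, DP.le p x} → X ∪ Z ∈ DP.Con) Z hZfin
        (fun _ => by simpa using hX) ?_
      intro a s _ _ ih hsub
      have hs : X ∪ s ∈ DP.Con := ih (fun z hz => hsub (Set.mem_insert_of_mem _ hz))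
      obtain ⟨x, hx, hax⟩ := hsub (Set.mem_insert a s)
      have := hP.con_le _ hs a x hax (Set.mem_union_left _ hx)
      refine hP.con_mono _ _ ?_ this
      intro z hz
      rcases hz with hz | hz
      · exact Or.inl (Or.inl hz)
      · rcases hz with rfl | hz
        · exact Or.inr rfl
        · exact Or.inl (Or.inr hz)
    exact hP.con_mono _ _ (Set.subset_union_right) (key Y hYfin hY)

/-- Characterisation of maps of ese's: a partial function is a map of ese's
iff it preserves the equivalence, sends consistent sets to consistent sets
locally reflecting the equivalence, and reflects causal dependency. -/
theorem stmt12 {Pt : Type u} {Qt : Type v} (DP : ESEData Pt) (hP : IsESE DP)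
    (DQ : ESEData Qt) (hQ : IsESE DQ) (f : Pt → Option Qt) :
    IsESEMap DP DQ f ↔
      (PreservesEqv DP.eqv DQ.eqv f ∧
       (∀ X ∈ DP.Con, pimage f X ∈ DQ.Con ∧
          ∀ p₁ ∈ X, ∀ p₂ ∈ X, ∀ q₁ q₂, f p₁ = some q₁ → f p₂ = some q₂ →
            DQ.eqv q₁ q₂ → DP.eqv p₁ p₂) ∧
       (∀ p q', f p = some q' → ∀ q, DQ.le q q' → ∃ p', DP.le p' p ∧ f p' = some q)) := by
  constructor
  · rintro ⟨hpres, hcfg⟩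
    refine ⟨hpres, ?_, ?_⟩
    · intro X hX
      set D : Set Pt := {p | ∃ x ∈ X, DP.le p x} with hD
      have hDcfg : D ∈ Cfgs DP := dnCl_cfg DP hP hX
      obtain ⟨hIm, hRef⟩ := hcfg D hDcfg
      have hXD : X ⊆ D := fun p hp => ⟨p, hp, hP.le_refl p⟩
      constructor
      · have hsub : pimage f X ⊆ pimage f D := by
          rintro b ⟨a, ha, hfa⟩; exact ⟨a, hXD ha, hfa⟩
        have hfin : (pimage f X).Finite := by
          have hXfin := hP.con_fin X hX
          have hsub2 : pimage f X ⊆ Option.some ⁻¹' (f '' X) := by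
            rintro b ⟨a, ha, hfa⟩
            exact ⟨a, ha, hfa⟩
          exact ((hXfin.image f).preimage (Option.some_injective _).injOn).subset hsub2
        exact hIm.2 _ hsub hfin
      · intro p₁ hp₁ p₂ hp₂ q₁ q₂ h₁ h₂ heq
        exact hRef p₁ (hXD hp₁) p₂ (hXD hp₂) q₁ q₂ h₁ h₂ heq
    · intro p q' hfp q hq
      have hpc : ({p} : Set Pt) ∈ DP.Con := hP.con_single p
      have hcfgp : {p' | ∃ x ∈ ({p} : Set Pt), DP.le p' x} ∈ Cfgs DP :=
        dnCl_cfg DP hP hpc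
      obtain ⟨hIm, _⟩ := hcfg _ hcfgp
      have hq' : q' ∈ pimage f {p' | ∃ x ∈ ({p} : Set Pt), DP.le p' x} :=
        ⟨p, ⟨p, rfl, hP.le_refl p⟩, hfp⟩
      have := hIm.1 q' hq' q hq
      obtain ⟨p', ⟨x, hx, hle⟩, hfp'⟩ := this
      rcases hx with rfl
      exact ⟨p', hle, hfp'⟩
  · rintro ⟨hpres, hcon, hrefl⟩
    refine ⟨hpres, ?_⟩
    intro x ⟨hdn, hfin⟩
    constructor
    · constructor
      · rintro b ⟨a, ha, hfa⟩ q hq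
        obtain ⟨p', hle, hfp'⟩ := hrefl a b hfa q hq
        exact ⟨p', hdn a ha p' hle, hfp'⟩
      · intro Y hY hYfin
        have hchoice : ∀ b ∈ Y, ∃ a ∈ x, f a = some b := fun b hb => hY hb
        choose g hg1 hg2 using hchoice
        classical
        set X : Set Pt := (fun b : {b // b ∈ Y} => g b.1 b.2) '' Set.univ with hXdef
        have hXx : X ⊆ x := by rintro _ ⟨⟨b, hb⟩, _, rfl⟩; exact hg1 b hb
        have hXfin : X.Finite := by
          have : (Set.univ : Set {b // b ∈ Y}).Finite := by
            have := hYfin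
            have : Finite {b // b ∈ Y} := hYfin.to_subtype
            exact Set.finite_univ
          exact this.image _
        have hXcon : X ∈ DP.Con := hfin X hXx hXfin
        have hYsub : Y ⊆ pimage f X := by
          intro b hb
          exact ⟨g b hb, ⟨⟨b, hb⟩, trivial, rfl⟩, hg2 b hb⟩
        exact hQ.con_mono _ _ hYsub (hcon X hXcon).1
    · intro p₁ hp₁ p₂ hp₂ q₁ q₂ h₁ h₂ heq
      have hXcon : ({p₁, p₂} : Set Pt) ∈ DP.Con :=
        hfin _ (by rintro z (rfl | rfl) <;> assumption)
          ((Set.finite_singleton _).insert _)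
      exact (hcon _ hXcon).2 p₁ (Or.inl rfl) p₂ (Or.inr rfl) q₁ q₂ h₁ h₂ heq
end

section
/- Let (A,≡) be an equivalence family and col(A,≡) its collapse to a general event structure, with unit map η_A : (A,≡) → (C(col(A,≡)), =) given by η_A(a) = {a}_≡, a map of equivalence families. Then for every general event structure B = (B, Con_B, ⊢_B) and every map of equivalence families g : (A,≡) → (C(B), =), there is a unique map of general event structures k : col(A,≡) → B such that the underlying partial function of k composed with η_A equals g. -/
universe u v w

/-- The data of a general event structure. -/
structure GESData (E : Type u) where
  Con : Set (Set E)
  en : Set E → E → Prop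

/-- The axioms of a general event structure. -/
structure IsGES {E : Type u} (D : GESData E) : Prop where
  con_nonempty : D.Con.Nonempty
  con_fin : ∀ X ∈ D.Con, X.Finite
  con_mono : ∀ X Y, X ⊆ Y → Y ∈ D.Con → X ∈ D.Con
  en_con : ∀ X e, D.en X e → X ∈ D.Con
  en_mono : ∀ X Y e, D.en X e → X ⊆ Y → Y ∈ D.Con → D.en Y e

/-- Configurations of a general event structure: consistent, secured subsets. -/
def GESCfg {E : Type u} (D : GESData E) (x : Set E) : Prop :=
  (∀ X ⊆ x, X.Finite → X ∈ D.Con) ∧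
  ∀ e ∈ x, ∃ l : List E, l ≠ [] ∧ l.getLast? = some e ∧ (∀ a ∈ l, a ∈ x) ∧
    ∀ (i : ℕ) (h : i < l.length), D.en {a | a ∈ l.take i} (l.get ⟨i, h⟩)

/-- A map of general event structures. -/
def IsGESMap {E : Type u} {E' : Type v} (D : GESData E) (D' : GESData E')
    (f : E → Option E') : Prop :=
  (∀ X ∈ D.Con, pimage f X ∈ D'.Con) ∧
  (∀ X ∈ D.Con, ∀ a₁ ∈ X, ∀ a₂ ∈ X, ∀ b, f a₁ = some b → f a₂ = some b → a₁ = a₂) ∧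
  (∀ X e, D.en X e → ∀ b, f e = some b → D'.en (pimage f X) b)

/-- Consistency of the collapse: finite subsets of `y_≡` for `y` in the family. -/
def colCon {A : Type u} (C : ConfigFamily A) (eqA : A → A → Prop) : Set (Set (Quot eqA)) :=
  {X | X.Finite ∧ ∃ y ∈ C.F, X ⊆ Quot.mk eqA '' y}

/-- Enabling of the collapse: `X ⊢ e` iff `X` is consistent and
`e ∈ y_≡ ⊆ X ∪ {e}` for some `y` in the family. -/
def colEn {A : Type u} (C : ConfigFamily A) (eqA : A → A → Prop)
    (X : Set (Quot eqA)) (e : Quot eqA) : Prop :=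
  X ∈ colCon C eqA ∧ ∃ y ∈ C.F, e ∈ Quot.mk eqA '' y ∧ Quot.mk eqA '' y ⊆ X ∪ {e}

/-- The collapse of an equivalence family to a general event structure, whose
events are the equivalence classes. -/
def colGES {A : Type u} (C : ConfigFamily A) (eqA : A → A → Prop) : GESData (Quot eqA) :=
  { Con := colCon C eqA, en := colEn C eqA }

lemma aux_pimage_some {α : Type u} {β : Type v} (f : α → β) (x : Set α) :
    pimage (fun a => some (f a)) x = f '' x := by
  ext b; simp [pimage, Set.mem_image]

lemma aux_pimage_finite {α : Type u} {β : Type v} (k : α → Option β) {X : Set α}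
    (h : X.Finite) : (pimage k X).Finite := by
  have : pimage k X = Option.some ⁻¹' (k '' X) := by
    ext b; simp [pimage, Set.mem_preimage, Set.mem_image, eq_comm]
  rw [this]
  exact Set.Finite.preimage (Set.injOn_of_injective (Option.some_injective β)) (h.image k)

lemma aux_first_occ {β : Type v} (b : β) : ∀ (l : List β), b ∈ l →
    ∃ j, ∃ h : j < l.length, l.get ⟨j, h⟩ = b ∧ b ∉ l.take j := by
  intro l hb
  induction l with
  | nil => simp at hb
  | cons c t ih =>
    by_cases hcb : c = b
    · exact ⟨0, by simp, by simpa using hcb.symm ▸ rfl, by simp⟩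
    · have hbt : b ∈ t := by
        rcases List.mem_cons.mp hb with h | h
        · exact absurd h.symm hcb
        · exact h
      rcases ih hbt with ⟨j, hj, hget, hnt⟩
      refine ⟨j + 1, by simpa using Nat.succ_lt_succ hj, by simpa using hget, ?_⟩
      intro hmem
      rw [List.take_succ_cons] at hmem
      rcases List.mem_cons.mp hmem with h | h
      · exact hcb h.symm
      · exact hnt h

lemma aux_get_mem_take_succ {α : Type u} (l : List α) (i : ℕ) (h : i < l.length) :
    l.get ⟨i, h⟩ ∈ l.take (i + 1) := by
  rw [List.get_eq_getElem, List.take_succ, List.getElem?_eq_getElem h]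
  exact List.mem_append_right _ (by simp)

lemma aux_mem_take_succ {α : Type u} (l : List α) (i : ℕ) (h : i < l.length) (a : α)
    (ha : a ∈ l.take (i + 1)) : a ∈ l.take i ∨ a = l.get ⟨i, h⟩ := by
  rw [List.take_succ, List.getElem?_eq_getElem h] at ha
  rcases List.mem_append.mp ha with h1 | h2
  · exact Or.inl h1
  · right; simpa using h2

lemma aux_setOf_take_map {α : Type u} {β : Type v} (f : α → β) (l : List α) (i : ℕ) :
    {b | b ∈ (l.map f).take i} = f '' {a | a ∈ l.take i} := by
  ext b
  simp only [Set.mem_setOf_eq, Set.mem_image, ← List.map_take, List.mem_map]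

/-- The universal property of the collapse: the unit `η(a) = {a}_≡` is a map
of equivalence families from `(A,≡)` to the configurations of `col(A,≡)` with
identity equivalence, and every map of equivalence families from `(A,≡)` to
the configurations of a general event structure `B` factors uniquely through
it via a map of general event structures `k : col(A,≡) → B`. -/
theorem stmt14 {A : Type u} (C : ConfigFamily A) (eqA : A → A → Prop)
    (heq : Equivalence eqA) :
    IsEFMap C.F eqA {x | GESCfg (colGES C eqA) x} (· = ·)
      (fun a => some (Quot.mk eqA a)) ∧
    ∀ (Bt : Type v) (DB : GESData Bt), IsGES DB →
      ∀ g : A → Option Bt, IsEFMap C.F eqA {x | GESCfg DB x} (· = ·) g →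
        ∃! k : Quot eqA → Option Bt,
          IsGESMap (colGES C eqA) DB k ∧ ∀ a, g a = k (Quot.mk eqA a) := by
  have hquot_eq : ∀ a₁ a₂ : A, Quot.mk eqA a₁ = Quot.mk eqA a₂ → eqA a₁ a₂ := by
    intro a₁ a₂ h
    exact heq.eqvGen_iff.mp (@Quot.eqvGen_exact A eqA a₁ a₂ h)
  -- the key fact: images of configurations are configurations of the collapse
  have himg_cfg : ∀ x ∈ C.F, GESCfg (colGES C eqA) (Quot.mk eqA '' x) := by
    intro x hx
    constructor
    · intro X hX hXfin
      exact ⟨hXfin, x, hx, hX⟩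
    · rintro e ⟨a, hax, rfl⟩
      obtain ⟨l, hne, hlast, hmeml, hpref⟩ := C.secured x hx a hax
      refine ⟨l.map (Quot.mk eqA), by simpa using hne, ?_, ?_, ?_⟩
      · rw [List.getLast?_map, hlast]; rfl
      · rintro q hq
        obtain ⟨a', ha'l, rfl⟩ := List.mem_map.mp hq
        exact ⟨a', hmeml a' ha'l, rfl⟩
      · intro i hi
        have hil : i < l.length := by simpa using hi
        have hXfin : {q | q ∈ (l.map (Quot.mk eqA)).take i}.Finite :=
          ((l.map (Quot.mk eqA)).take i).finite_toSet
        have hXsub : {q | q ∈ (l.map (Quot.mk eqA)).take i} ⊆ Quot.mk eqA '' x := by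
          rw [aux_setOf_take_map]
          rintro q ⟨a', ha', rfl⟩
          exact ⟨a', hmeml a' (List.mem_of_mem_take ha'), rfl⟩
        have hXcon : {q | q ∈ (l.map (Quot.mk eqA)).take i} ∈ colCon C eqA :=
          ⟨hXfin, x, hx, hXsub⟩
        have hy : {a' | a' ∈ l.take (i + 1)} ∈ C.F :=
          hpref (i + 1) (Nat.succ_pos i) hil
        have hget : (l.map (Quot.mk eqA)).get ⟨i, hi⟩ = Quot.mk eqA (l.get ⟨i, hil⟩) := by
          simp
        refine ⟨hXcon, {a' | a' ∈ l.take (i + 1)}, hy, ?_, ?_⟩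
        · rw [hget]
          exact ⟨l.get ⟨i, hil⟩, aux_get_mem_take_succ l i hil, rfl⟩
        · rintro q ⟨a', ha', rfl⟩
          rcases aux_mem_take_succ l i hil a' ha' with h | h
          · left
            rw [aux_setOf_take_map]
            exact ⟨a', h, rfl⟩
          · right
            rw [Set.mem_singleton_iff, hget, h]
  constructor
  · -- the unit is a map of equivalence families
    refine ⟨?_, ?_⟩
    · intro a₁ a₂ h
      exact Or.inr ⟨_, _, rfl, rfl, Quot.sound h⟩
    · intro x hx
      refine ⟨?_, ?_⟩
      · show GESCfg (colGES C eqA) _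
        rw [aux_pimage_some]
        exact himg_cfg x hx
      · intro a₁ _ a₂ _ b₁ b₂ h1 h2 hb
        apply hquot_eq
        simp only at h1 h2
        rw [← Option.some_inj, h1, h2, hb]
  · -- universal property
    intro Bt DB hB g hg
    obtain ⟨hgpres, hgcfg⟩ := hg
    have hconst : ∀ a₁ a₂, eqA a₁ a₂ → g a₁ = g a₂ := by
      intro a₁ a₂ h
      rcases hgpres a₁ a₂ h with ⟨h1, h2⟩ | ⟨b₁, b₂, h1, h2, hb⟩
      · rw [h1, h2]
      · rw [h1, h2, hb]
    set k : Quot eqA → Option Bt := Quot.lift g hconst with hkdef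
    have hk : ∀ a, k (Quot.mk eqA a) = g a := fun a => rfl
    have hcon1 : ∀ X ∈ (colGES C eqA).Con, pimage k X ∈ DB.Con := by
      rintro X ⟨hfin, y, hy, hsub⟩
      have hycfg : GESCfg DB (pimage g y) := (hgcfg y hy).1
      refine hycfg.1 (pimage k X) ?_ (aux_pimage_finite k hfin)
      rintro b ⟨e, heX, hkeb⟩
      obtain ⟨a, hay, rfl⟩ := hsub heX
      exact ⟨a, hay, hkeb⟩
    refine ⟨k, ⟨⟨hcon1, ?_, ?_⟩, fun a => rfl⟩, ?_⟩
    · -- local injectivity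
      rintro X ⟨hfin, y, hy, hsub⟩ e₁ h₁ e₂ h₂ b hb₁ hb₂
      obtain ⟨a₁, ha₁, rfl⟩ := hsub h₁
      obtain ⟨a₂, ha₂, rfl⟩ := hsub h₂
      exact Quot.sound ((hgcfg y hy).2 a₁ ha₁ a₂ ha₂ b b hb₁ hb₂ rfl)
    · -- enabling
      rintro X e ⟨hXcon, y, hy, ⟨a, hay, hae⟩, hsub⟩ b hkb
      have hga : g a = some b := by rw [← hk a, hae, hkb]
      have hycfg : GESCfg DB (pimage g y) := (hgcfg y hy).1
      have hbmem : b ∈ pimage g y := ⟨a, hay, hga⟩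
      obtain ⟨l, hne, hlast, hmeml, hsteps⟩ := hycfg.2 b hbmem
      have hbl : b ∈ l := by
        rw [List.getLast?_eq_getLast hne] at hlast
        rw [← Option.some_inj.mp hlast]
        exact List.getLast_mem hne
      obtain ⟨j, hjlen, hgetj, hbnot⟩ := aux_first_occ b l hbl
      have hstep : DB.en {b' | b' ∈ l.take j} b := hgetj ▸ hsteps j hjlen
      refine hB.en_mono _ _ _ hstep ?_ (hcon1 X hXcon)
      intro b' hb'
      have hb'mem : b' ∈ pimage g y := hmeml b' (List.mem_of_mem_take hb')
      obtain ⟨a', ha'y, hga'⟩ := hb'mem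
      rcases hsub ⟨a', ha'y, rfl⟩ with h | h
      · exact ⟨Quot.mk eqA a', h, by rw [hk a', hga']⟩
      · exfalso
        rw [Set.mem_singleton_iff] at h
        have : some b' = some b := by rw [← hga', ← hk a', h, hkb]
        exact hbnot (Option.some_inj.mp this ▸ hb')
    · -- uniqueness
      rintro k' ⟨hk'map, hk'comm⟩
      funext q
      induction q using Quot.ind with
      | _ a => rw [← hk'comm a, hk a]
end

section
/- For any equivalence family (A,≡): whenever y ∈ A, the set y_≡ = {{a}_≡ : a ∈ y} is a configuration of the collapse col(A,≡); and col(A,≡) is a replete general event structure. -/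
universe u v w

/-- A general event structure is replete. -/
def Replete {E : Type u} (D : GESData E) : Prop :=
  (∀ e : E, ∃ X, D.en X e) ∧
  (∀ X ∈ D.Con, ∃ x, GESCfg D x ∧ x.Finite ∧ X ⊆ x) ∧
  (∀ X e, D.en X e → ∃ x, GESCfg D x ∧ x.Finite ∧ e ∈ x ∧ x ⊆ X ∪ {e})

section Aux

variable {A : Type u} (C : ConfigFamily A) (eqA : A → A → Prop)

lemma chain_set {x : Set A} (hx : x ∈ C.F) {e : A} (he : e ∈ x) :
    ∃ z ∈ C.F, z.Finite ∧ z ⊆ x ∧ e ∈ z := by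
  obtain ⟨l, hne, hlast, hmem, hpre⟩ := C.secured x hx e he
  refine ⟨{a | a ∈ l}, ?_, l.finite_toSet, fun a ha => hmem a ha,
    List.mem_of_getLast? hlast⟩
  have := hpre l.length (List.length_pos_iff.mpr hne) le_rfl
  simpa using this

lemma fin_cover {y : Set A} (hy : y ∈ C.F) {S : Set A} (hS : S.Finite) (hSy : S ⊆ y) :
    ∃ z ∈ C.F, z.Finite ∧ S ⊆ z ∧ z ⊆ y := by
  choose z hzF hzfin hzsub hzmem using fun a (ha : a ∈ S) => chain_set C hy (hSy ha)
  set Fam : Set (Set A) := {w | ∃ a, ∃ ha : a ∈ S, z a ha = w} with hFam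
  have hFamfin : Fam.Finite := hS.dependent_image z
  have hFamsub : Fam ⊆ C.F := by rintro w ⟨a, ha, rfl⟩; exact hzF a ha
  have hunion : ⋃₀ Fam ∈ C.F := by
    refine C.unionClosed Fam hFamsub fun Y hY _ => ⟨y, hy, fun w hw => ?_⟩
    obtain ⟨a, ha, rfl⟩ := hY hw
    exact hzsub a ha
  refine ⟨⋃₀ Fam, hunion, hFamfin.sUnion ?_, ?_, ?_⟩
  · rintro w ⟨a, ha, rfl⟩; exact hzfin a ha
  · intro a ha; exact ⟨z a ha, ⟨a, ha, rfl⟩, hzmem a ha⟩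
  · rintro a ⟨w, ⟨b, hb, rfl⟩, haw⟩; exact hzsub b hb haw

lemma image_cfg {y : Set A} (hy : y ∈ C.F) :
    GESCfg (colGES C eqA) (Quot.mk eqA '' y) := by
  constructor
  · intro X hX hXfin
    exact ⟨hXfin, y, hy, hX⟩
  · rintro e ⟨a, ha, rfl⟩
    obtain ⟨l, hne, hlast, hmem, hpre⟩ := C.secured y hy a ha
    refine ⟨l.map (Quot.mk eqA), by simpa using hne, ?_, ?_, ?_⟩
    · rw [List.getLast?_map, hlast]; rfl
    · rintro b hb
      rw [List.mem_map] at hb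
      obtain ⟨c, hc, rfl⟩ := hb
      exact ⟨c, hmem c hc, rfl⟩
    · intro i hi
      have hi' : i < l.length := by simpa using hi
      have hget : (l.map (Quot.mk eqA)).get ⟨i, hi⟩ = Quot.mk eqA (l.get ⟨i, hi'⟩) := by
        simp
      have htake : {b | b ∈ (l.map (Quot.mk eqA)).take i}
          = Quot.mk eqA '' {b | b ∈ l.take i} := by
        ext b
        simp [← List.map_take, Set.mem_image]
      have hy' : {b | b ∈ l.take (i + 1)} ∈ C.F :=
        hpre (i + 1) (Nat.succ_pos i) hi'
      have htakesucc : l.take (i + 1) = l.take i ++ [l.get ⟨i, hi'⟩] :=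
        (List.take_concat_get' l i hi').symm
      rw [hget]
      refine ⟨⟨?_, y, hy, ?_⟩, {b | b ∈ l.take (i + 1)}, hy', ?_, ?_⟩
      · exact ((l.map (Quot.mk eqA)).take i).finite_toSet
      · rw [htake]
        exact Set.image_mono fun b hb => hmem b (List.mem_of_mem_take hb)
      · exact ⟨l.get ⟨i, hi'⟩, by
          show l.get ⟨i, hi'⟩ ∈ l.take (i + 1)
          rw [htakesucc]
          exact List.mem_append_right _ (List.mem_singleton.mpr rfl), rfl⟩
      · rintro b ⟨c, hc, rfl⟩
        rw [htakesucc] at hc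
        rcases List.mem_append.mp hc with hc | hc
        · left; rw [htake]; exact ⟨c, hc, rfl⟩
        · right; simp at hc; simp [hc]

end Aux

/-- For any equivalence family `(A,≡)`: whenever `y ∈ A`, the set `y_≡` is a
configuration of the collapse `col(A,≡)`; and `col(A,≡)` is replete. -/
theorem stmt15 {A : Type u} (C : ConfigFamily A) (eqA : A → A → Prop)
    (heq : Equivalence eqA) :
    (∀ y ∈ C.F, GESCfg (colGES C eqA) (Quot.mk eqA '' y)) ∧
    Replete (colGES C eqA) := by
  have main : ∀ y ∈ C.F, GESCfg (colGES C eqA) (Quot.mk eqA '' y) :=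
    fun _ hy => image_cfg C eqA hy
  refine ⟨main, ?_, ?_, ?_⟩
  · intro e
    induction e using Quot.ind with
    | _ a =>
      obtain ⟨x, hx, hax⟩ := C.covers a
      obtain ⟨z, hzF, hzfin, _, haz⟩ := chain_set C hx hax
      exact ⟨Quot.mk eqA '' z,
        ⟨⟨hzfin.image _, z, hzF, subset_rfl⟩,
         z, hzF, ⟨a, haz, rfl⟩, Set.subset_union_left⟩⟩
  · rintro X ⟨hXfin, y, hy, hXsub⟩
    choose f hf hfq using fun e (he : e ∈ X) => hXsub he
    set S : Set A := {a | ∃ e, ∃ he : e ∈ X, f e he = a} with hS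
    have hSfin : S.Finite := hXfin.dependent_image f
    have hSy : S ⊆ y := by rintro a ⟨e, he, rfl⟩; exact hf e he
    obtain ⟨z, hzF, hzfin, hSz, _⟩ := fin_cover C hy hSfin hSy
    refine ⟨Quot.mk eqA '' z, main z hzF, hzfin.image _, fun e he => ?_⟩
    exact ⟨f e he, hSz ⟨e, he, rfl⟩, hfq e he⟩
  · rintro X e ⟨hXcon, y, hy, ⟨a, hay, rfl⟩, hsub⟩
    obtain ⟨z, hzF, hzfin, hzy, haz⟩ := chain_set C hy hay
    refine ⟨Quot.mk eqA '' z, main z hzF, hzfin.image _, ⟨a, haz, rfl⟩, ?_⟩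
    exact fun b hb => hsub (Set.image_mono hzy hb)
end

section
/- Let f : P → Q be a (partial) map of ese's and let V = {p ∈ P : f(p) is defined}, a ≡-closed subset of P. Then f factors as f = f₁ ∘ f₀ where f₀ : P → P↓V is the partial map sending p ∈ V to itself and undefined elsewhere, and f₁ : P↓V → Q is the total map acting as f on V. Moreover this factorisation is universal: for any factorisation f = g₁ ∘ g₀ with g₀ : P → P₁ a partial map of ese's and g₁ : P₁ → Q a total map of ese's, there is a unique (necessarily total) map h : P↓V → P₁ of ese's such that h ∘ f₀ = g₀ and g₁ ∘ h = f₁. -/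
universe u v w

/-- The restriction (projection) of an ese to a subset of its events, with the
restricted causal dependency, consistency and equivalence. -/
def restrictESE {P : Type u} (D : ESEData P) (V : Set P) : ESEData ↥V where
  le := fun a b => D.le a.val b.val
  Con := {X | Subtype.val '' X ∈ D.Con}
  eqv := fun a b => D.eqv a.val b.val

/-- The domain of definition of a partial function. -/
def domOf {α : Type u} {β : Type v} (f : α → Option β) : Set α := {a | ∃ b, f a = some b}

open Classical in
/-- The projection map `P → P↓V` where `V` is the domain of definition of `f`:
the identity on `V` and undefined elsewhere. -/
noncomputable def projMap {α : Type u} {β : Type v} (f : α → Option β) (a : α) :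
    Option ↥(domOf f) :=
  if h : a ∈ domOf f then some ⟨a, h⟩ else none

lemma projMap_eq_some {α : Type u} {β : Type v} (f : α → Option β) (a : α)
    (b : ↥(domOf f)) : projMap f a = some b ↔ a ∈ domOf f ∧ b.val = a := by
  unfold projMap
  by_cases h : a ∈ domOf f
  · simp only [dif_pos h]
    constructor
    · rintro hb; cases hb; exact ⟨h, rfl⟩
    · rintro ⟨-, hb⟩; subst hb; rfl
  · simp only [dif_neg h]; simp; exact fun hb => (h hb).elim

lemma union_con {Pt : Type u} {DP : ESEData Pt} (hP : IsESE DP) (Y : Set Pt)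
    (hY : Y ∈ DP.Con) :
    ∀ (X : Set Pt), X.Finite → (∀ a ∈ X, ∃ v ∈ Y, DP.le a v) → Y ∪ X ∈ DP.Con := by
  intro X hX
  refine Set.Finite.induction_on (motive := fun X _ => (∀ a ∈ X, ∃ v ∈ Y, DP.le a v) → Y ∪ X ∈ DP.Con)
    X hX (fun _ => by simpa using hY) ?_
  intro a X ha hXf ih hsub
  have h1 : Y ∪ X ∈ DP.Con := ih (fun a ha => hsub a (Set.mem_insert_of_mem _ ha))
  obtain ⟨v, hv, hle⟩ := hsub a (Set.mem_insert _ _)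
  have h2 := hP.con_le _ h1 a v hle (Or.inl hv)
  have heq : Y ∪ insert a X = (Y ∪ X) ∪ {a} := by
    ext p; simp [Set.mem_insert_iff]
  rw [heq]
  exact h2

/-- The down-closure of (the image of) a configuration of the restriction is a
configuration of the whole ese. -/
lemma dnclosure_cfg {Pt : Type u} {DP : ESEData Pt} (hP : IsESE DP) (V : Set Pt)
    (y : Set ↥V) (hy : y ∈ Cfgs (restrictESE DP V)) :
    {p | ∃ v ∈ y, DP.le p v.val} ∈ Cfgs DP := by
  constructor
  · intro a ⟨v, hv, hav⟩ b hba
    exact ⟨v, hv, hP.le_trans _ _ _ hba hav⟩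
  · intro X hX hXf
    choose w hw hwle using fun a (ha : a ∈ X) => hX ha
    have hY'f : {u | ∃ a, ∃ ha : a ∈ X, w a ha = u}.Finite := hXf.dependent_image w
    have hY'sub : {u | ∃ a, ∃ ha : a ∈ X, w a ha = u} ⊆ y := by
      rintro u ⟨a, ha, rfl⟩; exact hw a ha
    have hYcon : Subtype.val '' {u | ∃ a, ∃ ha : a ∈ X, w a ha = u} ∈ DP.Con :=
      hy.2 _ hY'sub hY'f
    have h2 := union_con hP _ hYcon X hXf (by
      intro a ha
      exact ⟨(w a ha).val, ⟨w a ha, ⟨a, ha, rfl⟩, rfl⟩, hwle a ha⟩)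
    exact hP.con_mono _ _ (Set.subset_union_right) h2

/-- Partial–total factorisation of maps of ese's through the projection to
the domain of definition, and its universal property. -/
theorem stmt18 {Pt : Type u} {Qt : Type v} (DP : ESEData Pt) (hP : IsESE DP)
    (DQ : ESEData Qt) (hQ : IsESE DQ) (f : Pt → Option Qt)
    (hf : IsESEMap DP DQ f) :
    IsESEMap DP (restrictESE DP (domOf f)) (projMap f) ∧
    IsESEMap (restrictESE DP (domOf f)) DQ (fun v => f v.val) ∧
    (∀ v : ↥(domOf f), ∃ q, f v.val = some q) ∧
    (∀ p, f p = (projMap f p).bind (fun v => f v.val)) ∧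
    ∀ (P₁t : Type w) (D₁ : ESEData P₁t), IsESE D₁ →
      ∀ (g₀ : Pt → Option P₁t) (g₁ : P₁t → Option Qt),
        IsESEMap DP D₁ g₀ → IsESEMap D₁ DQ g₁ → (∀ a, ∃ b, g₁ a = some b) →
        (∀ p, f p = (g₀ p).bind g₁) →
        ∃! h : ↥(domOf f) → Option P₁t,
          IsESEMap (restrictESE DP (domOf f)) D₁ h ∧
          (∀ p, g₀ p = (projMap f p).bind h) ∧
          (∀ v : ↥(domOf f), f v.val = (h v).bind g₁) := by
  have hnone : ∀ a, a ∉ domOf f → f a = none := by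
    intro a ha
    cases hfa : f a with
    | none => rfl
    | some b => exact absurd ⟨b, hfa⟩ ha
  have hproj_some : ∀ a (h : a ∈ domOf f), projMap f a = some ⟨a, h⟩ := by
    intro a h; rw [projMap, dif_pos h]
  have hproj_none : ∀ a, a ∉ domOf f → projMap f a = none := by
    intro a h; rw [projMap, dif_neg h]
  refine ⟨⟨?_, ?_⟩, ⟨?_, ?_⟩, ?_, ?_, ?_⟩
  · -- projMap preserves eqv
    intro a₁ a₂ h
    rcases hf.1 a₁ a₂ h with ⟨h1, h2⟩ | ⟨b₁, b₂, h1, h2, -⟩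
    · left
      refine ⟨hproj_none a₁ ?_, hproj_none a₂ ?_⟩ <;> rintro ⟨b, hb⟩
      · rw [h1] at hb; simp at hb
      · rw [h2] at hb; simp at hb
    · have m1 : a₁ ∈ domOf f := ⟨b₁, h1⟩
      have m2 : a₂ ∈ domOf f := ⟨b₂, h2⟩
      exact Or.inr ⟨⟨a₁, m1⟩, ⟨a₂, m2⟩, hproj_some a₁ m1, hproj_some a₂ m2, h⟩
  · -- projMap on configurations
    intro x hx
    constructor
    · constructor
      · rintro b ⟨a, ha, hab⟩ b' hle
        obtain ⟨ham, hba⟩ := (projMap_eq_some f a b).mp hab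
        refine ⟨b'.val, hx.1 a ha b'.val (hba ▸ hle), ?_⟩
        exact (projMap_eq_some f b'.val b').mpr ⟨b'.2, rfl⟩
      · intro X hX hXf
        show Subtype.val '' X ∈ DP.Con
        refine hx.2 _ ?_ (hXf.image _)
        rintro p ⟨b, hb, rfl⟩
        obtain ⟨a, ha, hab⟩ := hX hb
        obtain ⟨-, hba⟩ := (projMap_eq_some f a b).mp hab
        exact hba ▸ ha
    · intro a₁ h1 a₂ h2 b₁ b₂ hb1 hb2 heq
      obtain ⟨-, e1⟩ := (projMap_eq_some f a₁ b₁).mp hb1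
      obtain ⟨-, e2⟩ := (projMap_eq_some f a₂ b₂).mp hb2
      exact e1 ▸ e2 ▸ (heq : DP.eqv b₁.val b₂.val)
  · -- f₁ preserves eqv
    intro v₁ v₂ h
    exact hf.1 v₁.val v₂.val h
  · -- f₁ on configurations
    intro y hy
    have hx := dnclosure_cfg hP (domOf f) y hy
    have himg : pimage (fun v : ↥(domOf f) => f v.val) y
        = pimage f {p | ∃ v ∈ y, DP.le p v.val} := by
      ext q
      constructor
      · rintro ⟨v, hv, hq⟩
        exact ⟨v.val, ⟨v, hv, hP.le_refl _⟩, hq⟩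
      · rintro ⟨p, ⟨v, hv, hpv⟩, hq⟩
        have hp : p ∈ domOf f := ⟨q, hq⟩
        exact ⟨⟨p, hp⟩, hy.1 v hv ⟨p, hp⟩ hpv, hq⟩
    constructor
    · rw [himg]; exact (hf.2 _ hx).1
    · intro v₁ h1 v₂ h2 b₁ b₂ hb1 hb2 heq
      exact (hf.2 _ hx).2 v₁.val ⟨v₁, h1, hP.le_refl _⟩ v₂.val ⟨v₂, h2, hP.le_refl _⟩
        b₁ b₂ hb1 hb2 heq
  · -- totality
    intro v; exact v.2
  · -- factorisation
    intro p
    by_cases hp : p ∈ domOf f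
    · rw [hproj_some p hp]; rfl
    · rw [hproj_none p hp, hnone p hp]; rfl
  · -- universal property
    intro P₁t D₁ hD₁ g₀ g₁ hg₀ hg₁ hg₁tot hfac
    have hdom : ∀ p, p ∈ domOf f ↔ ∃ b, g₀ p = some b := by
      intro p
      constructor
      · rintro ⟨q, hq⟩
        cases hgp : g₀ p with
        | none => rw [hfac p, hgp] at hq; simp at hq
        | some b => exact ⟨b, rfl⟩
      · rintro ⟨b, hb⟩
        obtain ⟨c, hc⟩ := hg₁tot b
        exact ⟨c, by rw [hfac p, hb]; exact hc⟩
    refine ⟨fun v => g₀ v.val, ⟨⟨?_, ?_⟩, ?_, ?_⟩, ?_⟩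
    · intro v₁ v₂ h
      exact hg₀.1 v₁.val v₂.val h
    · intro y hy
      have hx := dnclosure_cfg hP (domOf f) y hy
      have himg : pimage (fun v : ↥(domOf f) => g₀ v.val) y
          = pimage g₀ {p | ∃ v ∈ y, DP.le p v.val} := by
        ext b
        constructor
        · rintro ⟨v, hv, hb⟩
          exact ⟨v.val, ⟨v, hv, hP.le_refl _⟩, hb⟩
        · rintro ⟨p, ⟨v, hv, hpv⟩, hb⟩
          have hp : p ∈ domOf f := (hdom p).mpr ⟨b, hb⟩
          exact ⟨⟨p, hp⟩, hy.1 v hv ⟨p, hp⟩ hpv, hb⟩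
      constructor
      · rw [himg]; exact (hg₀.2 _ hx).1
      · intro v₁ h1 v₂ h2 b₁ b₂ hb1 hb2 heq
        exact (hg₀.2 _ hx).2 v₁.val ⟨v₁, h1, hP.le_refl _⟩ v₂.val ⟨v₂, h2, hP.le_refl _⟩
          b₁ b₂ hb1 hb2 heq
    · intro p
      by_cases hp : p ∈ domOf f
      · rw [hproj_some p hp]; rfl
      · rw [hproj_none p hp]
        cases hgp : g₀ p with
        | none => rfl
        | some b => exact absurd ((hdom p).mpr ⟨b, hgp⟩) hp
    · intro v
      exact hfac v.val
    · rintro h' ⟨-, hb', -⟩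
      funext v
      have := hb' v.val
      rw [hproj_some v.val v.2] at this
      exact (this.symm : (some ⟨v.val, v.2⟩ : Option ↥(domOf f)).bind h' = g₀ v.val)
end
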